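/- For every fixed s in (0,1), the function t ↦ sin(ts/2)/sin(t/2) is monotone increasing on (0, 2π). -/

import Mathlib

open Real Set

lemma d1_aux_deriv (s : ℝ) (x : ℝ) :
    HasDerivAt (fun x => s * Real.cos (s*x) * Real.sin x - Real.cos x * Real.sin (s*x))
      ((1 - s^2) * Real.sin (s*x) * Real.sin x) x := by
  have hsx : HasDerivAt (fun x : ℝ => s * x) s x := by
    simpa using (hasDerivAt_id x).const_mul s
  have h1 : HasDerivAt (fun x => Real.cos (s*x)) (-Real.sin (s*x) * s) x :=
    (Real.hasDerivAt_cos (s*x)).comp x hsx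
  have h2 : HasDerivAt (fun x => Real.sin (s*x)) (Real.cos (s*x) * s) x :=
    (Real.hasDerivAt_sin (s*x)).comp x hsx
  have hA : HasDerivAt (fun x => s * Real.cos (s*x) * Real.sin x)
      ((s * (-Real.sin (s*x) * s)) * Real.sin x + (s * Real.cos (s*x)) * Real.cos x) x :=
    (h1.const_mul s).mul (Real.hasDerivAt_sin x)
  have hB : HasDerivAt (fun x => Real.cos x * Real.sin (s*x))
      ((-Real.sin x) * Real.sin (s*x) + Real.cos x * (Real.cos (s*x) * s)) x :=
    (Real.hasDerivAt_cos x).mul h2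
  have : HasDerivAt (fun x => s * Real.cos (s*x) * Real.sin x - Real.cos x * Real.sin (s*x)) _ x := hA.sub hB
  convert this using 1
  ring

lemma d1_aux_nonneg (s : ℝ) (hs0 : 0 < s) (hs1 : s < 1) :
    ∀ x ∈ Icc (0:ℝ) π, 0 ≤ s * Real.cos (s*x) * Real.sin x - Real.cos x * Real.sin (s*x) := by
  set h : ℝ → ℝ := fun x => s * Real.cos (s*x) * Real.sin x - Real.cos x * Real.sin (s*x) with hh
  have hmono : MonotoneOn h (Icc 0 π) := by
    apply monotoneOn_of_deriv_nonneg (convex_Icc 0 π)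
    · exact Continuous.continuousOn (by
        have : ∀ x, HasDerivAt h ((1 - s^2) * Real.sin (s*x) * Real.sin x) x := d1_aux_deriv s
        exact continuous_iff_continuousAt.mpr fun x => (this x).continuousAt)
    · intro x hx
      exact (d1_aux_deriv s x).differentiableAt.differentiableWithinAt
    · intro x hx
      rw [interior_Icc] at hx
      rw [(d1_aux_deriv s x).deriv]
      have hx0 : 0 < x := hx.1
      have hxπ : x < π := hx.2
      have hsinx : 0 < Real.sin x := Real.sin_pos_of_pos_of_lt_pi hx0 hxπ
      have hsinsx : 0 < Real.sin (s*x) := by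
        apply Real.sin_pos_of_pos_of_lt_pi (by positivity)
        calc s * x < 1 * x := by nlinarith
        _ = x := one_mul x
        _ < π := hxπ
      have : 0 < 1 - s^2 := by nlinarith
      positivity
  intro x hx
  have h0 : h 0 = 0 := by simp [hh]
  have := hmono (left_mem_Icc.mpr Real.pi_pos.le) hx hx.1
  rw [h0] at this
  simpa [hh] using this

theorem d1_ratio_monotone (s : ℝ) (hs : s ∈ Set.Ioo (0:ℝ) 1) :
    MonotoneOn (fun t : ℝ => Real.sin (t * s / 2) / Real.sin (t / 2))
      (Set.Ioo 0 (2 * π)) := by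
  obtain ⟨hs0, hs1⟩ := hs
  have hsin_pos : ∀ t ∈ Set.Ioo (0:ℝ) (2*π), 0 < Real.sin (t/2) := by
    intro t ht
    exact Real.sin_pos_of_pos_of_lt_pi (by linarith [ht.1]) (by linarith [ht.2])
  have hder : ∀ t ∈ Set.Ioo (0:ℝ) (2*π),
      HasDerivAt (fun t : ℝ => Real.sin (t * s / 2) / Real.sin (t / 2))
        ((Real.cos (t*s/2) * (s/2) * Real.sin (t/2) - Real.sin (t*s/2) * (Real.cos (t/2) * (1/2))) / (Real.sin (t/2))^2) t := by
    intro t ht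
    have h1 : HasDerivAt (fun t : ℝ => t * s / 2) (s/2) t := by
      simpa using ((hasDerivAt_id t).mul_const s).div_const 2
    have h2 : HasDerivAt (fun t : ℝ => t / 2) (1/2) t := by
      simpa using (hasDerivAt_id t).div_const 2
    have hu : HasDerivAt (fun t : ℝ => Real.sin (t*s/2)) (Real.cos (t*s/2) * (s/2)) t :=
      h1.sin
    have hv : HasDerivAt (fun t : ℝ => Real.sin (t/2)) (Real.cos (t/2) * (1/2)) t :=
      h2.sin
    exact hu.div hv (ne_of_gt (hsin_pos t ht))
  apply monotoneOn_of_deriv_nonneg (convex_Ioo 0 (2*π))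
  · apply ContinuousOn.div
    · exact (Real.continuous_sin.comp (by continuity)).continuousOn
    · exact (Real.continuous_sin.comp (by continuity)).continuousOn
    · intro t ht; exact ne_of_gt (hsin_pos t ht)
  · intro t ht
    rw [interior_Ioo] at ht
    exact (hder t ht).differentiableAt.differentiableWithinAt
  · intro t ht
    rw [interior_Ioo] at ht
    rw [(hder t ht).deriv]
    apply div_nonneg _ (sq_nonneg _)
    have key := d1_aux_nonneg s hs0 hs1 (t/2)
      ⟨by linarith [ht.1], by linarith [ht.2]⟩
    have he : s * (t/2) = t * s / 2 := by ring
    rw [he] at key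
    nlinarith [key]
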